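/- arXiv:2309.00539 — 6 statements merged into one kernel-verified Lean document; each statement's English description precedes it below -/
import Mathlib

section
/- The improper integral of z² · ln(1+e^z)/(1+e^z) over the whole real line equals 7·ζ(4), i.e. ∫_{-∞}^{+∞} z² ln(1+eᶻ)/(1+eᶻ) dz = 7π⁴/90. -/
open Real MeasureTheory Set Filter Topology

lemma integrableOn_pow_exp (n : ℕ) {c : ℝ} (hc : 0 < c) :
    IntegrableOn (fun x : ℝ => x ^ n * Real.exp (-(c * x))) (Set.Ioi 0) := by
  apply integrable_of_isBigO_exp_neg (half_pos hc)
    (Continuous.continuousOn (by continuity))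
  rw [Asymptotics.isBigO_iff]
  have h := tendsto_rpow_mul_exp_neg_mul_atTop_nhds_zero n (c / 2) (half_pos hc)
  have h2 : Tendsto (fun x : ℝ => x ^ n * Real.exp (-(c * x)) / Real.exp (-(c / 2 * x)))
      atTop (𝓝 0) := by
    apply h.congr'
    filter_upwards [eventually_gt_atTop (0 : ℝ)] with x hx
    rw [Real.rpow_natCast, mul_div_assoc, ← Real.exp_sub]
    congr 2
    ring
  refine ⟨1, ?_⟩
  filter_upwards [h2.eventually (eventually_le_nhds (by norm_num : (0:ℝ) < 1)),
    eventually_gt_atTop (0 : ℝ)] with x hx hx0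
  have hxe : 0 < Real.exp (-(c / 2 * x)) := Real.exp_pos _
  rw [show -(c/2) * x = -(c/2 * x) from by ring, Real.norm_eq_abs, Real.norm_eq_abs,
    abs_of_pos hxe, one_mul,
    abs_of_nonneg (by positivity : (0:ℝ) ≤ x ^ n * Real.exp (-(c * x)))]
  exact (div_le_one hxe).mp hx

lemma integral_pow_exp (n : ℕ) {c : ℝ} (hc : 0 < c) :
    ∫ x in Set.Ioi 0, x ^ n * Real.exp (-(c * x)) = (n.factorial : ℝ) / c ^ (n + 1) := by
  have h := Real.integral_rpow_mul_exp_neg_mul_Ioi (a := (n : ℝ) + 1) (by positivity) hc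
  rw [show ((n:ℝ) + 1 - 1) = (n:ℝ) by ring, Real.Gamma_nat_eq_factorial] at h
  have e1 : ∀ x ∈ Set.Ioi (0:ℝ), x ^ (n:ℝ) * Real.exp (-(c*x)) = x ^ n * Real.exp (-(c*x)) :=
    fun x _ => by rw [Real.rpow_natCast]
  rw [setIntegral_congr_fun measurableSet_Ioi e1] at h
  rw [h, show ((n:ℝ)+1) = ((n+1:ℕ):ℝ) by push_cast; ring, Real.rpow_natCast, div_pow, one_pow]
  field_simp

lemma log_one_add_exp (z : ℝ) :
    Real.log (1 + Real.exp z) = z + Real.log (1 + Real.exp (-z)) := by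
  have hv : 0 < 1 + Real.exp (-z) := by positivity
  have h1 : 1 + Real.exp z = Real.exp z * (1 + Real.exp (-z)) := by
    rw [mul_add, mul_one, ← Real.exp_add]
    simp [add_comm]
  rw [h1, Real.log_mul (Real.exp_ne_zero z) (ne_of_gt hv), Real.log_exp]

lemma gadd (z : ℝ) :
    z ^ 2 * Real.log (1 + Real.exp z) / (1 + Real.exp z)
      + (-z) ^ 2 * Real.log (1 + Real.exp (-z)) / (1 + Real.exp (-z))
    = z ^ 2 * Real.log (1 + Real.exp (-z))
      + z ^ 3 * Real.exp (-z) / (1 + Real.exp (-z)) := by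
  have ht : 0 < Real.exp z := Real.exp_pos z
  have hv : 0 < 1 + Real.exp (-z) := by positivity
  have h1 : 1 + Real.exp z = Real.exp z * (1 + Real.exp (-z)) := by
    rw [mul_add, mul_one, ← Real.exp_add]
    simp [add_comm]
  rw [log_one_add_exp z, h1]
  have h2 : Real.exp z ≠ 0 := (Real.exp_pos z).ne'
  have h3 : 1 + Real.exp (-z) ≠ 0 := hv.ne'
  rw [Real.exp_neg] at *
  field_simp
  ring

theorem zeta4_integral :
    ∫ z : ℝ, z ^ 2 * Real.log (1 + Real.exp z) / (1 + Real.exp z) =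
      7 * Real.pi ^ 4 / 90 := by
  set g : ℝ → ℝ := fun z => z ^ 2 * Real.log (1 + Real.exp z) / (1 + Real.exp z) with hg
  have hc : ∀ n : ℕ, (0:ℝ) < (n:ℝ) + 1 := fun n => by positivity
  have hpos : ∀ z : ℝ, (0:ℝ) < 1 + Real.exp z := fun z => by positivity
  have hcont : Continuous g := by
    apply Continuous.div
    · exact (continuous_pow 2).mul
        ((continuous_const.add Real.continuous_exp).log (fun x => (hpos x).ne'))
    · exact continuous_const.add Real.continuous_exp
    · exact fun x => (hpos x).ne'
  have hlognn : ∀ z : ℝ, 0 ≤ Real.log (1 + Real.exp z) := fun z =>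
    Real.log_nonneg (by nlinarith [Real.exp_pos z])
  have hg_nonneg : ∀ z, 0 ≤ g z := by
    intro z
    have h2 := hlognn z
    have h3 := hpos z
    rw [hg]
    positivity
  have hlogle : ∀ z : ℝ, Real.log (1 + Real.exp (-z)) ≤ Real.exp (-z) := by
    intro z
    have := Real.log_le_sub_one_of_pos (hpos (-z))
    linarith
  have hIoi : IntegrableOn g (Ioi 0) := by
    refine Integrable.mono'
      (((integrableOn_pow_exp 3 one_pos).add (integrableOn_pow_exp 2 one_pos)))
      hcont.aestronglyMeasurable.restrict ?_
    filter_upwards [ae_restrict_mem measurableSet_Ioi] with x hx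
    rw [Real.norm_eq_abs, abs_of_nonneg (hg_nonneg x)]
    have hx0 : (0:ℝ) < x := hx
    have h1 : Real.log (1 + Real.exp x) ≤ x + 1 := by
      have h2 : Real.exp (-x) ≤ 1 := by
        rw [Real.exp_le_one_iff]; linarith
      have := hlogle x
      rw [log_one_add_exp x]; linarith
    have hdiv : Real.log (1 + Real.exp x) / (1 + Real.exp x) ≤ (x + 1) * Real.exp (-x) := by
      have h3 : Real.log (1 + Real.exp x) / (1 + Real.exp x) ≤ (x + 1) / Real.exp x :=
        div_le_div₀ (by linarith) h1 (Real.exp_pos x) (by linarith [Real.exp_pos x])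
      rwa [Real.exp_neg, ← div_eq_mul_inv]
    calc g x = x ^ 2 * (Real.log (1 + Real.exp x) / (1 + Real.exp x)) := by
          simp only [hg]; ring
      _ ≤ x ^ 2 * ((x + 1) * Real.exp (-x)) :=
          mul_le_mul_of_nonneg_left hdiv (by positivity)
      _ = x ^ 3 * Real.exp (-(1 * x)) + x ^ 2 * Real.exp (-(1 * x)) := by
          rw [one_mul]; ring
  have hIoiNeg : IntegrableOn (fun x => g (-x)) (Ioi 0) := by
    refine Integrable.mono' (integrableOn_pow_exp 2 one_pos)
      (hcont.comp continuous_neg).aestronglyMeasurable.restrict ?_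
    filter_upwards [ae_restrict_mem measurableSet_Ioi] with x hx
    rw [Real.norm_eq_abs, abs_of_nonneg (hg_nonneg (-x))]
    have hx0 : (0:ℝ) < x := hx
    have hdiv : Real.log (1 + Real.exp (-x)) / (1 + Real.exp (-x)) ≤ Real.exp (-x) :=
      le_trans (div_le_self (hlognn (-x)) (by linarith [Real.exp_pos (-x)])) (hlogle x)
    calc g (-x) = x ^ 2 * (Real.log (1 + Real.exp (-x)) / (1 + Real.exp (-x))) := by
          simp only [hg]; ring
      _ ≤ x ^ 2 * Real.exp (-x) := mul_le_mul_of_nonneg_left hdiv (by positivity)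
      _ = x ^ 2 * Real.exp (-(1 * x)) := by rw [one_mul]
  have hIic : IntegrableOn g (Iic 0) := by
    have m : MeasurableEmbedding (fun x : ℝ => -x) :=
      (Homeomorph.neg ℝ).measurableEmbedding
    rw [IntegrableOn, ← Measure.map_neg_eq_self (volume : Measure ℝ)]
    rw [← IntegrableOn, m.integrableOn_map_iff]
    simp only [Function.comp_def, neg_preimage, neg_Iic, neg_zero]
    exact Iff.mpr integrableOn_Ici_iff_integrableOn_Ioi hIoiNeg
  have hsplit : ∫ z, g z = (∫ z in Iic 0, g z) + ∫ z in Ioi 0, g z :=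
    (intervalIntegral.integral_Iic_add_Ioi hIic hIoi).symm
  have hneg : ∫ z in Iic 0, g z = ∫ z in Ioi 0, g (-z) := by
    have h := integral_comp_neg_Iic (0:ℝ) (fun z => g (-z))
    simp only [neg_neg, neg_zero] at h
    exact h
  have hmain : ∫ z, g z = ∫ z in Ioi 0, (g (-z) + g z) := by
    rw [hsplit, hneg, ← integral_add hIoiNeg hIoi]
  set F : ℕ → ℝ → ℝ :=
    fun n x => (-1:ℝ)^n * (x^2/((n:ℝ)+1) + x^3) * Real.exp (-(((n:ℝ)+1) * x)) with hF
  have hFint : ∀ n, Integrable (F n) (volume.restrict (Ioi 0)) := by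
    intro n
    have h := (((integrableOn_pow_exp 2 (hc n)).const_mul ((-1:ℝ)^n/((n:ℝ)+1))).add
      ((integrableOn_pow_exp 3 (hc n)).const_mul ((-1:ℝ)^n)))
    apply h.congr
    filter_upwards with x
    simp only [hF, Pi.add_apply]
    ring
  have hFval : ∀ n, ∫ x in Ioi 0, F n x = (-1:ℝ)^n * (8 / ((n:ℝ)+1)^4) := by
    intro n
    have hfe : ∀ x : ℝ, F n x =
        ((-1:ℝ)^n/((n:ℝ)+1)) * (x^2 * Real.exp (-(((n:ℝ)+1) * x)))
          + ((-1:ℝ)^n) * (x^3 * Real.exp (-(((n:ℝ)+1) * x))) := by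
      intro x; simp only [hF]; ring
    rw [integral_congr_ae (Filter.Eventually.of_forall hfe),
      integral_add (((integrableOn_pow_exp 2 (hc n)).const_mul _))
        (((integrableOn_pow_exp 3 (hc n)).const_mul _)),
      integral_const_mul, integral_const_mul, integral_pow_exp 2 (hc n),
      integral_pow_exp 3 (hc n),
      show ((Nat.factorial 2 : ℕ) : ℝ) = 2 by norm_num [Nat.factorial],
      show ((Nat.factorial 3 : ℕ) : ℝ) = 6 by norm_num [Nat.factorial]]
    have hne := (hc n).ne'
    field_simp
    ring
  have hFnormval : ∀ n, ∫ x in Ioi 0, ‖F n x‖ = 8 / ((n:ℝ)+1)^4 := by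
    intro n
    have habs : ∀ x ∈ Ioi (0:ℝ), ‖F n x‖ =
        (1/((n:ℝ)+1)) * (x^2 * Real.exp (-(((n:ℝ)+1) * x)))
          + (1:ℝ) * (x^3 * Real.exp (-(((n:ℝ)+1) * x))) := by
      intro x hx
      have hx0 : (0:ℝ) < x := hx
      have h1 : (0:ℝ) ≤ (x^2/((n:ℝ)+1) + x^3) * Real.exp (-(((n:ℝ)+1) * x)) := by
        have := hc n; positivity
      rw [Real.norm_eq_abs, hF]
      simp only
      rw [mul_assoc, abs_mul, abs_pow, abs_neg, abs_one, one_pow, one_mul, abs_of_nonneg h1]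
      ring
    rw [setIntegral_congr_fun measurableSet_Ioi habs,
      integral_add (((integrableOn_pow_exp 2 (hc n)).const_mul _))
        (((integrableOn_pow_exp 3 (hc n)).const_mul _)),
      integral_const_mul, integral_const_mul, integral_pow_exp 2 (hc n),
      integral_pow_exp 3 (hc n),
      show ((Nat.factorial 2 : ℕ) : ℝ) = 2 by norm_num [Nat.factorial],
      show ((Nat.factorial 3 : ℕ) : ℝ) = 6 by norm_num [Nat.factorial]]
    have hne := (hc n).ne'
    field_simp
    ring
  have hsummable : Summable (fun n : ℕ => (8:ℝ) / ((n:ℝ)+1)^4) := by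
    have h : Summable (fun n : ℕ => 1 / (n:ℝ)^4) := summable_one_div_nat_pow.mpr (by norm_num)
    have h2 := ((summable_nat_add_iff 1).mpr h).mul_left 8
    apply h2.congr
    intro n
    push_cast
    ring
  have hFsum : Summable (fun n => ∫ x in Ioi 0, ‖F n x‖) :=
    hsummable.congr (fun n => (hFnormval n).symm)
  have key := hasSum_integral_of_summable_integral_norm hFint hFsum
  have hpt : ∀ x ∈ Ioi (0:ℝ), HasSum (fun n => F n x) (g (-x) + g x) := by
    intro x hx
    have hx0 : (0:ℝ) < x := hx
    have he : 0 < Real.exp (-x) := Real.exp_pos _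
    have habs : |(-Real.exp (-x))| < 1 := by
      rw [abs_neg, abs_of_pos he]
      exact Real.exp_lt_one_iff.mpr (by linarith)
    have hpow : ∀ m : ℕ, (-Real.exp (-x))^m = (-1:ℝ)^m * Real.exp (-((m:ℝ)*x)) := by
      intro m
      rw [neg_pow, ← Real.exp_nat_mul, mul_neg]
    have hA := (hasSum_pow_div_log_of_abs_lt_one habs).mul_left (-(x^2))
    have hB := (hasSum_geometric_of_abs_lt_one habs).mul_left (x^3 * Real.exp (-x))
    have hAB := hA.add hB
    have hfun : (fun n : ℕ =>
        -(x^2) * ((-Real.exp (-x))^(n+1)/((n:ℝ)+1))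
          + x^3 * Real.exp (-x) * (-Real.exp (-x))^n) = fun n => F n x := by
      funext n
      have h1 : (-Real.exp (-x))^(n+1) = (-1:ℝ)^(n+1) * Real.exp (-(((n:ℝ)+1)*x)) := by
        rw [hpow (n+1)]
        push_cast
        ring_nf
      have h2 : Real.exp (-x) * (-Real.exp (-x))^n = (-1:ℝ)^n * Real.exp (-(((n:ℝ)+1)*x)) := by
        rw [hpow n, mul_left_comm, ← Real.exp_add,
          show -x + -((n:ℝ)*x) = -(((n:ℝ)+1)*x) by ring]
      rw [h1, mul_assoc (x^3), h2]
      simp only [hF]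
      rw [pow_succ]
      ring
    have hval : -(x^2) * -Real.log (1 - -Real.exp (-x))
        + x^3 * Real.exp (-x) * (1 - -Real.exp (-x))⁻¹ = g (-x) + g x := by
      simp only [hg, sub_neg_eq_add]
      linear_combination (-1 : ℝ) * gadd x
    rw [hfun, hval] at hAB
    exact hAB
  have htsum : ∫ x in Ioi 0, (∑' n, F n x) = ∫ z in Ioi 0, (g (-z) + g z) :=
    setIntegral_congr_fun measurableSet_Ioi (fun x hx => (hpt x hx).tsum_eq)
  have hZ : HasSum (fun n : ℕ => 1/((n:ℝ)+1)^4) (π^4/90) := by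
    have h0 : HasSum (fun n : ℕ => 1/((n:ℝ))^4)
        (π^4/90 + ∑ i ∈ Finset.range 1, 1/((i:ℝ))^4) := by
      simpa using hasSum_zeta_four
    have h := (hasSum_nat_add_iff (f := fun n : ℕ => 1/(n:ℝ)^4) 1).mpr h0
    simp only [Nat.cast_add, Nat.cast_one] at h
    exact h
  have hOdd : HasSum (fun n : ℕ => ((1:ℝ) - (-1)^n)/((n:ℝ)+1)^4) (π^4/90/8) := by
    have hinj : Function.Injective (fun k : ℕ => 2*k+1) := fun a b h => by simp only at h; omega
    rw [← Function.Injective.hasSum_iff hinj ?_]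
    · have h8 := hZ.mul_left (1/8)
      have hcomp : ((fun n : ℕ => ((1:ℝ) - (-1)^n)/((n:ℝ)+1)^4) ∘ (fun k : ℕ => 2*k+1))
          = fun k : ℕ => 1/8 * (1/((k:ℝ)+1)^4) := by
        funext k
        simp only [Function.comp]
        have hodd : Odd (2*k+1) := ⟨k, by ring⟩
        rw [Odd.neg_one_pow hodd]
        have hk := (hc k).ne'
        push_cast
        field_simp
        ring
      rw [hcomp, show (π^4/90/8 : ℝ) = 1/8 * (π^4/90) by ring]
      exact h8
    · intro x hx
      have hev : Even x := by
        rcases Nat.even_or_odd x with h | h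
        · exact h
        · exact absurd (show x ∈ Set.range (fun k : ℕ => 2*k+1) from
            by obtain ⟨m, hm⟩ := h; exact ⟨m, show 2*m+1 = x by omega⟩) hx
      rw [Even.neg_one_pow hev, sub_self, zero_div]
  have hz : HasSum (fun n : ℕ => (-1:ℝ)^n * (8/((n:ℝ)+1)^4)) (7*π^4/90) := by
    have h := (hZ.sub hOdd).mul_left 8
    rw [show (8:ℝ) * (π^4/90 - π^4/90/8) = 7*π^4/90 by ring] at h
    have hfe : (fun n : ℕ => (8:ℝ) * (1/((n:ℝ)+1)^4 - ((1:ℝ) - (-1)^n)/((n:ℝ)+1)^4))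
        = fun n : ℕ => (-1:ℝ)^n * (8/((n:ℝ)+1)^4) := by
      funext n; ring
    rwa [hfe] at h
  have hIkey : HasSum (fun n : ℕ => (-1:ℝ)^n * (8/((n:ℝ)+1)^4))
      (∫ x in Ioi 0, ∑' n, F n x) := by
    have h := key
    rwa [funext hFval] at h
  rw [hmain, ← htsum]
  exact hIkey.unique hz
end

section
/- The improper integral of ln(1+e^z)/(1+e^z) over the whole real line equals ζ(2), i.e. ∫_{-∞}^{+∞} ln(1+eᶻ)/(1+eᶻ) dz = π²/6. -/
open Real MeasureTheory Set Filter Topology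

private lemma aux_integrable {c : ℝ} (hc : 0 < c) :
    IntegrableOn (fun x : ℝ => x * Real.exp (-(c * x))) (Ioi 0) := by
  have := integrableOn_rpow_mul_exp_neg_mul_rpow (s := 1) (p := 1) (b := c)
    (by norm_num) zero_lt_one hc
  refine this.congr_fun (fun x hx => ?_) measurableSet_Ioi
  simp only [Real.rpow_one, neg_mul]

private lemma aux_integral {c : ℝ} (hc : 0 < c) :
    ∫ x in Ioi (0:ℝ), x * Real.exp (-(c * x)) = 1 / c ^ 2 := by
  have hc' : c ≠ 0 := hc.ne'
  have hF : ∀ x ∈ Ici (0:ℝ),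
      HasDerivAt (fun x => -((x / c + 1 / c ^ 2) * Real.exp (-(c * x))))
        (x * Real.exp (-(c * x))) x := by
    intro x _
    have h1 : HasDerivAt (fun x : ℝ => x / c + 1 / c ^ 2) (1 / c) x := by
      exact ((hasDerivAt_id x).div_const c).add_const (1 / c ^ 2)
    have h2 : HasDerivAt (fun x : ℝ => Real.exp (-(c * x)))
        (Real.exp (-(c * x)) * (-c)) x := by simpa using (((hasDerivAt_id x).const_mul c).neg).exp
    have h3 := (h1.mul h2).neg
    refine h3.congr_deriv ?_
    field_simp
    ring
  have htend : Tendsto (fun x => -((x / c + 1 / c ^ 2) * Real.exp (-(c * x))))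
      atTop (𝓝 0) := by
    have t1 : Tendsto (fun x : ℝ => x * Real.exp (-(c * x))) atTop (𝓝 0) := by
      have := tendsto_rpow_mul_exp_neg_mul_atTop_nhds_zero 1 c hc
      refine this.congr' ?_
      filter_upwards [eventually_gt_atTop (0:ℝ)] with x hx
      rw [Real.rpow_one, neg_mul]
    have t2 : Tendsto (fun x : ℝ => Real.exp (-(c * x))) atTop (𝓝 0) := by
      exact Real.tendsto_exp_atBot.comp
        (tendsto_neg_atBot_iff.mpr (Tendsto.const_mul_atTop hc tendsto_id))
    have := ((t1.const_mul (1 / c)).add (t2.const_mul (1 / c ^ 2))).neg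
    simp only [mul_zero, add_zero, neg_zero, zero_add] at this
    refine this.congr (fun x => ?_)
    ring
  have := integral_Ioi_of_hasDerivAt_of_tendsto' hF (aux_integrable hc) htend
  rw [this]
  simp

private lemma aux_body : ∫ x in Ioi (0:ℝ), x / (Real.exp x - 1) = Real.pi ^ 2 / 6 := by
  -- the summed series
  have hsum : HasSum (fun n : ℕ => 1 / ((n : ℝ) + 1) ^ 2) (Real.pi ^ 2 / 6) := by
    have h2 := (hasSum_nat_add_iff' (f := fun n : ℕ => (1 : ℝ) / (n : ℝ) ^ 2) 1).mpr
      hasSum_zeta_two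
    simp only [Finset.range_one, Finset.sum_singleton, Nat.cast_zero] at h2
    norm_num at h2
    convert h2 using 2 with n
    push_cast
    · rfl
    · ring
  -- pointwise series expansion
  have hpt : ∀ x ∈ Ioi (0:ℝ),
      x / (Real.exp x - 1) = ∑' n : ℕ, x * Real.exp (-(((n : ℝ) + 1) * x)) := by
    intro x hx
    have hx0 : (0:ℝ) < x := hx
    have hr1 : Real.exp (-x) < 1 := by
      rw [Real.exp_lt_one_iff]; linarith
    have hr0 : (0:ℝ) < Real.exp (-x) := Real.exp_pos _
    have hterm : ∀ n : ℕ, x * Real.exp (-(((n : ℝ) + 1) * x))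
        = x * Real.exp (-x) ^ (n + 1) := by
      intro n
      rw [← Real.exp_nat_mul]
      push_cast
      ring_nf
    have hgeo : ∑' n : ℕ, Real.exp (-x) ^ (n + 1)
        = (1 - Real.exp (-x))⁻¹ * Real.exp (-x) := by
      simp_rw [pow_succ]
      rw [tsum_mul_right, tsum_geometric_of_lt_one hr0.le hr1]
    rw [tsum_congr hterm, tsum_mul_left, hgeo]
    have h1 : (1:ℝ) < Real.exp x := by
      simpa using Real.exp_lt_exp.mpr hx0
    have hne : Real.exp x - 1 ≠ 0 := by linarith
    have hne2 : Real.exp x ≠ 0 := (Real.exp_pos x).ne'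
    rw [Real.exp_neg]
    rw [inv_eq_one_div, inv_eq_one_div]
    field_simp
  have hpos : ∀ n : ℕ, (0:ℝ) < (n : ℝ) + 1 := fun n => by positivity
  have hval : ∀ n : ℕ, ∫ x in Ioi (0:ℝ), x * Real.exp (-(((n : ℝ) + 1) * x))
      = 1 / ((n : ℝ) + 1) ^ 2 := fun n => aux_integral (hpos n)
  have hF_int : ∀ n : ℕ, Integrable (fun x : ℝ => x * Real.exp (-(((n : ℝ) + 1) * x)))
      (volume.restrict (Ioi 0)) := fun n => aux_integrable (hpos n)
  have hnorm : ∀ n : ℕ, ∫ x in Ioi (0:ℝ), ‖x * Real.exp (-(((n : ℝ) + 1) * x))‖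
      = 1 / ((n : ℝ) + 1) ^ 2 := by
    intro n
    rw [← hval n]
    refine setIntegral_congr_fun measurableSet_Ioi (fun x hx => ?_)
    have hx0 : (0:ℝ) < x := hx
    rw [Real.norm_of_nonneg (by positivity)]
  have hF_sum : Summable fun n : ℕ =>
      ∫ x in Ioi (0:ℝ), ‖x * Real.exp (-(((n : ℝ) + 1) * x))‖ := by
    refine Summable.congr hsum.summable (fun n => (hnorm n).symm)
  calc ∫ x in Ioi (0:ℝ), x / (Real.exp x - 1)
      = ∫ x in Ioi (0:ℝ), ∑' n : ℕ, x * Real.exp (-(((n : ℝ) + 1) * x)) :=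
        setIntegral_congr_fun measurableSet_Ioi hpt
    _ = ∑' n : ℕ, ∫ x in Ioi (0:ℝ), x * Real.exp (-(((n : ℝ) + 1) * x)) :=
        (MeasureTheory.integral_tsum_of_summable_integral_norm hF_int hF_sum).symm
    _ = ∑' n : ℕ, 1 / ((n : ℝ) + 1) ^ 2 := tsum_congr hval
    _ = Real.pi ^ 2 / 6 := hsum.tsum_eq

theorem zeta2_integral :
    ∫ z : ℝ, Real.log (1 + Real.exp z) / (1 + Real.exp z) =
      Real.pi ^ 2 / 6 := by
  set f : ℝ → ℝ := fun z => Real.log (1 + Real.exp z) with hf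
  have hpos : ∀ z : ℝ, (0:ℝ) < 1 + Real.exp z := fun z => by positivity
  have hderiv : ∀ z : ℝ, HasDerivAt f (Real.exp z / (1 + Real.exp z)) z := by
    intro z
    exact ((Real.hasDerivAt_exp z).const_add 1).log (hpos z).ne'
  have hinj : Function.Injective f := by
    intro a b hab
    have := congrArg Real.exp hab
    rw [hf] at this
    simp only [Real.exp_log (hpos a), Real.exp_log (hpos b)] at this
    exact Real.exp_injective (by linarith)
  have himg : f '' univ = Ioi 0 := by
    ext t
    simp only [image_univ, mem_range, mem_Ioi]
    constructor
    · rintro ⟨z, rfl⟩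
      exact Real.log_pos (by linarith [Real.exp_pos z])
    · intro ht
      refine ⟨Real.log (Real.exp t - 1), ?_⟩
      have h1 : (1:ℝ) < Real.exp t := by simpa using Real.exp_lt_exp.mpr ht
      rw [hf]
      simp only
      rw [Real.exp_log (by linarith), add_sub_cancel, Real.log_exp]
  have key := integral_image_eq_integral_abs_deriv_smul MeasurableSet.univ
      (f' := fun z => Real.exp z / (1 + Real.exp z))
      (fun x _ => (hderiv x).hasDerivWithinAt) (hinj.injOn)
      (fun t => t / (Real.exp t - 1))
  rw [himg] at key
  rw [aux_body] at key
  rw [setIntegral_univ] at key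
  rw [key]
  refine integral_congr_ae (Eventually.of_forall (fun x => ?_))
  have he : Real.exp (f x) = 1 + Real.exp x := Real.exp_log (hpos x)
  dsimp only
  have hx0 : Real.exp x ≠ 0 := (Real.exp_pos x).ne'
  rw [smul_eq_mul, abs_of_pos (by positivity), he, add_sub_cancel_left]
  field_simp
  ring
end

section
/- The improper integral ∫_0^∞ (ln u)² ln(1+u)/(u(1+u)) du equals 7·ζ(4) = 7π⁴/90. -/
open Real Set MeasureTheory Filter

lemma exp_poly_int (k : ℕ) {c : ℝ} (hc : 0 < c) :
    IntegrableOn (fun t : ℝ => t ^ k * Real.exp (-(c * t))) (Ioi 0) := by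
  have h := Real.GammaIntegral_convergent (s := (k + 1 : ℝ)) (by positivity)
  have h2 : IntegrableOn (fun t : ℝ => Real.exp (-(c * t)) * (c * t) ^ ((k:ℝ) + 1 - 1)) (Ioi 0) := by
    have := (integrableOn_Ioi_comp_mul_left_iff
      (fun x : ℝ => Real.exp (-x) * x ^ ((k:ℝ) + 1 - 1)) 0 hc).mpr (by simpa using h)
    simpa using this
  have h4 : IntegrableOn
      (fun t : ℝ => (Real.exp (-(c * t)) * (c * t) ^ ((k:ℝ) + 1 - 1)) * (c ^ (k:ℝ))⁻¹) (Ioi 0) :=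
    h2.mul_const _
  apply h4.congr_fun _ measurableSet_Ioi
  intro t ht
  have hck : (0:ℝ) < c ^ (k:ℝ) := by positivity
  dsimp only
  rw [add_sub_cancel_right, Real.mul_rpow hc.le (le_of_lt ht), Real.rpow_natCast]
  simp only [Real.rpow_natCast]
  field_simp

lemma exp_poly_val (k : ℕ) {c : ℝ} (hc : 0 < c) :
    ∫ t in Ioi (0:ℝ), t ^ k * Real.exp (-(c * t)) = (Nat.factorial k : ℝ) / c ^ (k + 1) := by
  have h := Real.integral_rpow_mul_exp_neg_mul_Ioi (a := (k:ℝ) + 1) (r := c) (by positivity) hc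
  have h2 : ∫ t in Ioi (0:ℝ), t ^ k * Real.exp (-(c * t))
      = ∫ t in Ioi (0:ℝ), t ^ ((k:ℝ) + 1 - 1) * Real.exp (-(c * t)) := by
    refine setIntegral_congr_fun measurableSet_Ioi (fun t ht => ?_)
    rw [add_sub_cancel_right, Real.rpow_natCast]
  rw [h2, h, show (k:ℝ) + 1 = ((k+1:ℕ):ℝ) by push_cast; ring, Real.rpow_natCast,
    show ((k+1:ℕ):ℝ) = (k:ℝ)+1 by push_cast; ring, Real.Gamma_nat_eq_factorial]
  rw [div_pow, one_pow, div_mul_eq_mul_div, one_mul]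

lemma exp_neg_img : (fun t : ℝ => Real.exp (-t)) '' (Ioi 0) = Ioo 0 1 := by
  ext x
  constructor
  · rintro ⟨t, ht, rfl⟩
    exact ⟨Real.exp_pos _, by rw [Real.exp_lt_one_iff]; simpa using (mem_Ioi.mp ht)⟩
  · rintro ⟨hx0, hx1⟩
    exact ⟨-Real.log x, by simpa using Real.log_neg hx0 hx1, by simp [Real.exp_log hx0]⟩

lemma exp_neg_deriv : ∀ t ∈ Ioi (0:ℝ),
    HasDerivWithinAt (fun t : ℝ => Real.exp (-t)) (-Real.exp (-t)) (Ioi 0) t := by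
  intro t _
  simpa [Function.comp_def] using ((Real.hasDerivAt_exp (-t)).comp t (hasDerivAt_neg t)).hasDerivWithinAt

lemma exp_neg_inj : InjOn (fun t : ℝ => Real.exp (-t)) (Ioi 0) :=
  fun a _ b _ h => neg_injective (Real.exp_injective h)

lemma subst_key (m k : ℕ) : ∀ t ∈ Ioi (0:ℝ),
    |(-Real.exp (-t))| • ((fun y : ℝ => y ^ m * (Real.log y) ^ k) (Real.exp (-t)))
      = (-1:ℝ)^k * (t ^ k * Real.exp (-(((m:ℝ)+1) * t))) := by
  intro t _
  dsimp only
  rw [abs_neg, abs_of_pos (Real.exp_pos _), smul_eq_mul, Real.log_exp]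
  rw [show ((m:ℝ)+1) * t = t * (m+1) by ring, show Real.exp (-(t * ((m:ℝ)+1)))
    = Real.exp (-t) * Real.exp (-t) ^ m by
      rw [← Real.exp_nat_mul, ← Real.exp_add]; push_cast; ring_nf]
  rw [neg_pow t k]
  ring

lemma pow_log_int (m k : ℕ) :
    IntegrableOn (fun y : ℝ => y ^ m * (Real.log y) ^ k) (Ioo 0 1) := by
  rw [← exp_neg_img,
    integrableOn_image_iff_integrableOn_abs_deriv_smul measurableSet_Ioi exp_neg_deriv exp_neg_inj]
  have h : IntegrableOn (fun t : ℝ => (-1:ℝ)^k * (t ^ k * Real.exp (-(((m:ℝ)+1) * t)))) (Ioi 0) :=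
    (exp_poly_int k (c := (m:ℝ)+1) (by positivity)).const_mul ((-1:ℝ)^k)
  exact h.congr_fun (fun t ht => (subst_key m k t ht).symm) measurableSet_Ioi

lemma pow_log_val (m k : ℕ) :
    ∫ y in Ioo (0:ℝ) 1, y ^ m * (Real.log y) ^ k
      = (-1:ℝ)^k * (Nat.factorial k) / ((m:ℝ)+1) ^ (k+1) := by
  rw [← exp_neg_img,
    MeasureTheory.integral_image_eq_integral_abs_deriv_smul measurableSet_Ioi exp_neg_deriv
      exp_neg_inj]
  rw [setIntegral_congr_fun measurableSet_Ioi (subst_key m k), integral_const_mul,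
    exp_poly_val k (c := (m:ℝ)+1) (by positivity), mul_div_assoc]

lemma hasSum_shift_zeta4 : HasSum (fun n : ℕ => 1 / ((n:ℝ)+1) ^ 4) (π ^ 4 / 90) := by
  have h := hasSum_zeta_four
  rw [← hasSum_nat_add_iff' 1] at h
  simpa using h

lemma hasSum_eta4 : HasSum (fun n : ℕ => (-1:ℝ)^n / ((n:ℝ)+1) ^ 4) (7 * π ^ 4 / 720) := by
  have hf := hasSum_shift_zeta4
  set h : ℕ → ℝ := fun n => if Odd n then 2 / ((n:ℝ)+1) ^ 4 else 0 with hh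
  have hinj : Function.Injective (fun k : ℕ => 2*k+1) := fun a b hab => by simpa using hab
  have hcomp : HasSum (fun k : ℕ => h (2*k+1)) (π ^ 4/720) := by
    have h8 := hasSum_shift_zeta4.mul_left (1/8 : ℝ)
    have he : (fun k : ℕ => h (2*k+1)) = fun k : ℕ => (1/8:ℝ) * (1/((k:ℝ)+1)^4) := by
      funext k
      simp only [hh]
      rw [if_pos (show Odd (2*k+1) from ⟨k, rfl⟩)]
      push_cast
      rw [show ((2:ℝ)*k+1+1) = 2*((k:ℝ)+1) by ring, mul_pow]
      have : ((k:ℝ)+1)^4 ≠ 0 := by positivity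
      field_simp
      ring
    rw [he, show (π ^ 4/720 : ℝ) = (1/8) * (π ^ 4/90) by ring]
    exact h8
  have hside : ∀ x ∉ Set.range (fun k : ℕ => 2*k+1), h x = 0 := by
    intro x hx
    refine if_neg fun ⟨k, hk⟩ => hx ⟨k, by simp only []; omega⟩
  have hH : HasSum h (π ^ 4/720) := (Function.Injective.hasSum_iff hinj hside).mp hcomp
  have hs := hf.sub hH
  have he2 : (fun n : ℕ => 1 / ((n:ℝ)+1)^4 - h n) = fun n : ℕ => (-1:ℝ)^n / ((n:ℝ)+1) ^ 4 := by
    funext n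
    simp only [hh]
    rcases Nat.even_or_odd n with hpar | hpar
    · rw [if_neg (by simpa [Nat.not_odd_iff_even] using hpar), hpar.neg_one_pow]
      ring
    · rw [if_pos hpar, hpar.neg_one_pow]
      ring
  rw [he2] at hs
  rw [show (7 * π ^ 4 / 720 : ℝ) = π ^ 4 / 90 - π ^ 4 / 720 by ring]
  exact hs

lemma summable_aux (c : ℝ) : Summable (fun n : ℕ => c / ((n:ℝ)+1)^4) := by
  have := (hasSum_shift_zeta4.summable.mul_left c)
  simpa [mul_one_div, div_eq_mul_inv] using this

lemma integral_A :
    ∫ y in Ioo (0:ℝ) 1, (Real.log y)^2 * Real.log (1+y) / y = 7 * π ^ 4 / 360 := by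
  set μ := volume.restrict (Ioo (0:ℝ) 1) with hμ
  set F : ℕ → ℝ → ℝ := fun n y => ((-1:ℝ)^n/((n:ℝ)+1)) * (y ^ n * (Real.log y)^2) with hF
  have hF_int : ∀ n, Integrable (F n) μ := fun n => (pow_log_int n 2).const_mul _
  have hnorm : ∀ n : ℕ, ∫ a, ‖F n a‖ ∂μ = 2 / ((n:ℝ)+1)^4 := by
    intro n
    have : ∫ a, ‖F n a‖ ∂μ = ∫ y in Ioo (0:ℝ) 1, (1/((n:ℝ)+1)) * (y ^ n * (Real.log y)^2) := by
      refine setIntegral_congr_fun measurableSet_Ioo (fun y hy => ?_)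
      simp only [hF, norm_mul, norm_div, norm_pow, norm_neg, norm_one, one_pow, Real.norm_eq_abs]
      rw [abs_of_pos (by positivity : (0:ℝ) < (n:ℝ)+1), abs_of_pos hy.1, sq_abs]
    rw [this, integral_const_mul, pow_log_val n 2]
    norm_num
    rw [show ((n:ℝ)+1)^4 = ((n:ℝ)+1) * ((n:ℝ)+1)^3 by ring]
    field_simp
  have hF_sum : Summable (fun n => ∫ a, ‖F n a‖ ∂μ) := by
    rw [show (fun n => ∫ a, ‖F n a‖ ∂μ) = fun n : ℕ => 2 / ((n:ℝ)+1)^4 from funext hnorm]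
    exact summable_aux 2
  have key := MeasureTheory.hasSum_integral_of_summable_integral_norm hF_int hF_sum
  have hval : (fun n => ∫ a, F n a ∂μ) = fun n : ℕ => 2 * ((-1:ℝ)^n/((n:ℝ)+1)^4) := by
    funext n
    rw [hF]
    simp only
    rw [integral_const_mul, pow_log_val n 2]
    norm_num
    rw [show ((n:ℝ)+1)^4 = ((n:ℝ)+1) * ((n:ℝ)+1)^3 by ring]
    field_simp
  rw [hval] at key
  have heta := hasSum_eta4.mul_left 2
  have hsum : ∫ a, ∑' n, F n a ∂μ = 7 * π ^ 4 / 360 := by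
    rw [← key.tsum_eq, heta.tsum_eq]
    ring
  rw [← hsum]
  refine setIntegral_congr_fun measurableSet_Ioo (fun y hy => ?_)
  obtain ⟨hy0, hy1⟩ := hy
  have habs : |(-y)| < 1 := by rw [abs_neg, abs_of_pos hy0]; exact hy1
  have hlog := Real.hasSum_pow_div_log_of_abs_lt_one habs
  rw [show (1 : ℝ) - (-y) = 1 + y by ring] at hlog
  have hmul := hlog.mul_left (-(Real.log y)^2/y)
  have hfun : (fun n : ℕ => (-(Real.log y)^2/y) * ((-y) ^ (n+1) / ((n:ℝ)+1)))
      = fun n => F n y := by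
    funext n
    rw [hF]
    simp only
    rw [show (-y : ℝ) ^ (n+1) = (-1)^(n+1) * y^(n+1) by rw [neg_pow]]
    field_simp
    rw [pow_succ, pow_succ]
    ring
  rw [hfun] at hmul
  have := hmul.tsum_eq
  rw [this]
  field_simp

lemma integral_B :
    ∫ y in Ioo (0:ℝ) 1, (Real.log y)^3 / (1+y) = -(7 * π ^ 4) / 120 := by
  set μ := volume.restrict (Ioo (0:ℝ) 1) with hμ
  set F : ℕ → ℝ → ℝ := fun n y => ((-1:ℝ)^n) * (y ^ n * (Real.log y)^3) with hF
  have hF_int : ∀ n, Integrable (F n) μ := fun n => (pow_log_int n 3).const_mul _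
  have hnorm : ∀ n : ℕ, ∫ a, ‖F n a‖ ∂μ = 6 / ((n:ℝ)+1)^4 := by
    intro n
    have : ∫ a, ‖F n a‖ ∂μ = ∫ y in Ioo (0:ℝ) 1, -(y ^ n * (Real.log y)^3) := by
      refine setIntegral_congr_fun measurableSet_Ioo (fun y hy => ?_)
      simp only [hF, norm_mul, norm_pow, norm_neg, norm_one, one_pow, Real.norm_eq_abs, one_mul]
      have hlogneg : Real.log y < 0 := Real.log_neg hy.1 hy.2
      rw [abs_of_pos hy.1, abs_of_neg hlogneg]
      ring
    rw [this, integral_neg, pow_log_val n 3]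
    norm_num [Nat.factorial]
    ring
  have hF_sum : Summable (fun n => ∫ a, ‖F n a‖ ∂μ) := by
    rw [show (fun n => ∫ a, ‖F n a‖ ∂μ) = fun n : ℕ => 6 / ((n:ℝ)+1)^4 from funext hnorm]
    exact summable_aux 6
  have key := MeasureTheory.hasSum_integral_of_summable_integral_norm hF_int hF_sum
  have hval : (fun n => ∫ a, F n a ∂μ) = fun n : ℕ => -6 * ((-1:ℝ)^n/((n:ℝ)+1)^4) := by
    funext n
    rw [hF]
    simp only
    rw [integral_const_mul, pow_log_val n 3]
    norm_num [Nat.factorial]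
    ring
  rw [hval] at key
  have heta := hasSum_eta4.mul_left (-6)
  have hsum : ∫ a, ∑' n, F n a ∂μ = -(7 * π ^ 4) / 120 := by
    rw [← key.tsum_eq, heta.tsum_eq]
    ring
  rw [← hsum]
  refine setIntegral_congr_fun measurableSet_Ioo (fun y hy => ?_)
  obtain ⟨hy0, hy1⟩ := hy
  have habs : |(-y)| < 1 := by rw [abs_neg, abs_of_pos hy0]; exact hy1
  have hgeo := hasSum_geometric_of_abs_lt_one habs
  have hmul := hgeo.mul_left ((Real.log y)^3)
  have hfun : (fun n : ℕ => (Real.log y)^3 * (-y) ^ n) = fun n => F n y := by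
    funext n
    rw [hF]
    simp only
    rw [show (-y : ℝ) ^ n = (-1)^n * y^n by rw [neg_pow]]
    ring
  rw [hfun] at hmul
  rw [hmul.tsum_eq, show (1 : ℝ) - (-y) = 1 + y by ring]
  rw [div_eq_mul_inv]

lemma meas_log1p : Measurable fun y : ℝ => Real.log (1+y) :=
  Real.measurable_log.comp (measurable_const.add measurable_id)

lemma log_sq_int : IntegrableOn (fun y : ℝ => (Real.log y)^2) (Ioo 0 1) := by
  have := pow_log_int 0 2
  simpa using this

lemma intA : IntegrableOn (fun y : ℝ => (Real.log y)^2 * Real.log (1+y) / y) (Ioo 0 1) := by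
  refine log_sq_int.mono' ?_ ?_
  · exact (((Real.measurable_log.pow_const 2).mul meas_log1p).div
      measurable_id).aestronglyMeasurable
  · filter_upwards [ae_restrict_mem measurableSet_Ioo] with y hy
    obtain ⟨hy0, hy1⟩ := hy
    have h1 : Real.log (1+y) ≤ y := by
      have := Real.log_le_sub_one_of_pos (show (0:ℝ) < 1 + y by linarith)
      linarith
    have h2 : 0 ≤ Real.log (1+y) := Real.log_nonneg (by linarith)
    rw [Real.norm_eq_abs, abs_of_nonneg (by positivity)]
    rw [div_le_iff₀ hy0]
    nlinarith [sq_nonneg (Real.log y)]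

lemma intA2 : IntegrableOn (fun y : ℝ => (Real.log y)^2 * Real.log (1+y) / (1+y)) (Ioo 0 1) := by
  refine log_sq_int.mono' ?_ ?_
  · exact (((Real.measurable_log.pow_const 2).mul meas_log1p).div
      (measurable_const.add measurable_id)).aestronglyMeasurable
  · filter_upwards [ae_restrict_mem measurableSet_Ioo] with y hy
    obtain ⟨hy0, hy1⟩ := hy
    have h1 : Real.log (1+y) ≤ y := by
      have := Real.log_le_sub_one_of_pos (show (0:ℝ) < 1 + y by linarith)
      linarith
    have h2 : 0 ≤ Real.log (1+y) := Real.log_nonneg (by linarith)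
    rw [Real.norm_eq_abs, abs_of_nonneg (by positivity)]
    rw [div_le_iff₀ (by linarith : (0:ℝ) < 1 + y)]
    nlinarith [sq_nonneg (Real.log y)]

lemma intB : IntegrableOn (fun y : ℝ => (Real.log y)^3 / (1+y)) (Ioo 0 1) := by
  have hbound : IntegrableOn (fun y : ℝ => |(Real.log y)^3|) (Ioo 0 1) := by
    have := (pow_log_int 0 3).abs
    simpa [IntegrableOn] using this
  refine hbound.mono' ?_ ?_
  · exact ((Real.measurable_log.pow_const 3).div
      (measurable_const.add measurable_id)).aestronglyMeasurable
  · filter_upwards [ae_restrict_mem measurableSet_Ioo] with y hy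
    obtain ⟨hy0, hy1⟩ := hy
    rw [Real.norm_eq_abs, abs_div, abs_of_pos (by linarith : (0:ℝ) < 1 + y)]
    rw [div_le_iff₀ (by linarith : (0:ℝ) < 1 + y)]
    nlinarith [abs_nonneg ((Real.log y)^3)]

lemma intF : IntegrableOn
    (fun u : ℝ => (Real.log u)^2 * Real.log (1+u) / (u * (1+u))) (Ioo 0 1) := by
  refine log_sq_int.mono' ?_ ?_
  · exact (((Real.measurable_log.pow_const 2).mul meas_log1p).div
      (measurable_id.mul (measurable_const.add measurable_id))).aestronglyMeasurable
  · filter_upwards [ae_restrict_mem measurableSet_Ioo] with y hy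
    obtain ⟨hy0, hy1⟩ := hy
    have h1 : Real.log (1+y) ≤ y := by
      have := Real.log_le_sub_one_of_pos (show (0:ℝ) < 1 + y by linarith)
      linarith
    have h2 : 0 ≤ Real.log (1+y) := Real.log_nonneg (by linarith)
    rw [Real.norm_eq_abs, abs_of_nonneg (by positivity)]
    rw [div_le_iff₀ (by positivity : (0:ℝ) < y * (1 + y))]
    nlinarith [sq_nonneg (Real.log y), sq_nonneg y]

noncomputable def Gfun : ℝ → ℝ :=
  fun y => (Real.log y)^2 * Real.log (1+y) / (1+y) - (Real.log y)^3 / (1+y)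

lemma intG : IntegrableOn Gfun (Ioo 0 1) := intA2.sub intB

lemma inv_img : (fun x : ℝ => x⁻¹) '' (Ioi 1) = Ioo 0 1 := by
  ext y
  constructor
  · rintro ⟨x, hx, rfl⟩
    have hx1 : (1:ℝ) < x := hx
    exact ⟨by positivity, by rw [inv_lt_one_iff₀]; right; exact hx1⟩
  · rintro ⟨hy0, hy1⟩
    exact ⟨y⁻¹, by rw [mem_Ioi, one_lt_inv_iff₀]; exact ⟨hy0, hy1⟩, by simp⟩

lemma inv_deriv : ∀ x ∈ Ioi (1:ℝ),
    HasDerivWithinAt (fun x : ℝ => x⁻¹) (-(x^2)⁻¹) (Ioi 1) x := by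
  intro x hx
  exact (hasDerivAt_inv (by linarith [mem_Ioi.mp hx] : x ≠ 0)).hasDerivWithinAt

lemma invOn_inj : InjOn (fun x : ℝ => x⁻¹) (Ioi 1) :=
  fun a _ b _ h => inv_injective h

lemma subst_key2 : ∀ x ∈ Ioi (1:ℝ),
    |(-(x^2)⁻¹)| • Gfun x⁻¹ = (Real.log x)^2 * Real.log (1+x) / (x * (1+x)) := by
  intro x hx
  have hx1 : (1:ℝ) < x := hx
  have hx0 : (0:ℝ) < x := by linarith
  rw [smul_eq_mul, abs_neg, abs_of_pos (by positivity : (0:ℝ) < (x^2)⁻¹)]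
  unfold Gfun
  rw [Real.log_inv, show (1:ℝ) + x⁻¹ = (1+x)/x by field_simp; ring,
    Real.log_div (by positivity : (1:ℝ)+x ≠ 0) hx0.ne']
  have h1x : (0:ℝ) < 1 + x := by linarith
  field_simp
  ring

lemma K_eq : ∫ x in Ioi (1:ℝ), (Real.log x)^2 * Real.log (1+x) / (x * (1+x))
    = ∫ y in Ioo (0:ℝ) 1, Gfun y := by
  rw [← inv_img, MeasureTheory.integral_image_eq_integral_abs_deriv_smul
    measurableSet_Ioi inv_deriv invOn_inj Gfun]
  exact (setIntegral_congr_fun measurableSet_Ioi subst_key2).symm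

lemma intFIoi : IntegrableOn
    (fun x : ℝ => (Real.log x)^2 * Real.log (1+x) / (x * (1+x))) (Ioi 1) := by
  have h := (integrableOn_image_iff_integrableOn_abs_deriv_smul
    measurableSet_Ioi inv_deriv invOn_inj Gfun).mp (by rw [inv_img]; exact intG)
  exact h.congr_fun subst_key2 measurableSet_Ioi

theorem zeta4_integral_Ioi :
    ∫ u in Set.Ioi (0 : ℝ), (Real.log u) ^ 2 * Real.log (1 + u) / (u * (1 + u)) =
      7 * Real.pi ^ 4 / 90 := by
  have hIoc : IntegrableOn
      (fun u : ℝ => (Real.log u)^2 * Real.log (1+u) / (u * (1+u))) (Ioc 0 1) := by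
    rw [integrableOn_Ioc_iff_integrableOn_Ioo]
    exact intF
  have hsplit : Ioc (0:ℝ) 1 ∪ Ioi 1 = Ioi 0 := Ioc_union_Ioi_eq_Ioi zero_le_one
  rw [← hsplit, setIntegral_union (Ioc_disjoint_Ioi le_rfl) measurableSet_Ioi hIoc intFIoi,
    MeasureTheory.integral_Ioc_eq_integral_Ioo, K_eq, ← MeasureTheory.integral_add intF intG]
  have hpt : ∀ y ∈ Ioo (0:ℝ) 1,
      (Real.log y)^2 * Real.log (1+y) / (y * (1+y)) + Gfun y
        = (Real.log y)^2 * Real.log (1+y) / y - (Real.log y)^3 / (1+y) := by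
    intro y hy
    obtain ⟨hy0, hy1⟩ := hy
    unfold Gfun
    have h1 : (0:ℝ) < 1 + y := by linarith
    field_simp
    ring
  rw [setIntegral_congr_fun measurableSet_Ioo hpt, MeasureTheory.integral_sub intA intB,
    integral_A, integral_B]
  ring
end

section
/- The integral ∫_0^1 (ln t)² ln(1−t)/t dt equals −2·ζ(4) = −π⁴/45. -/
open Real MeasureTheory Set

private lemma exp_neg_image : (fun u : ℝ => Real.exp (-u)) '' Set.Ioi 0 = Set.Ioo (0 : ℝ) 1 := by
  ext y
  constructor
  · rintro ⟨u, hu, rfl⟩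
    exact ⟨Real.exp_pos _, by
      rw [Real.exp_lt_one_iff]; simpa using hu⟩
  · rintro ⟨hy0, hy1⟩
    exact ⟨-Real.log y, by simpa using Real.log_neg hy0 hy1, by
      simp [Real.exp_log hy0]⟩

private lemma exp_neg_hasDeriv (x : ℝ) :
    HasDerivWithinAt (fun u : ℝ => Real.exp (-u)) (-Real.exp (-x)) (Set.Ioi 0) x := by
  have h := ((Real.hasDerivAt_exp (-x)).comp x (hasDerivAt_neg x))
  have h2 := h.hasDerivWithinAt (s := Set.Ioi 0)
  simp only [mul_neg, mul_one] at h2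
  exact h2

private lemma exp_neg_injOn : Set.InjOn (fun u : ℝ => Real.exp (-u)) (Set.Ioi 0) := by
  intro a _ b _ h
  have := Real.exp_injective h
  linarith [neg_injective this]

private lemma smul_eq (n : ℕ) {x : ℝ} (hx : x ∈ Set.Ioi (0:ℝ)) :
    |(-Real.exp (-x))| • ((Real.exp (-x)) ^ n * Real.log (Real.exp (-x)) ^ 2)
      = x ^ ((3:ℝ) - 1) * Real.exp (-(((n:ℝ) + 1) * x)) := by
  have h1 : |(-Real.exp (-x))| = Real.exp (-x) := by
    rw [abs_neg, abs_of_pos (Real.exp_pos _)]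
  have h2 : (Real.exp (-x)) ^ n = Real.exp (-(n * x)) := by
    rw [← Real.exp_nat_mul]; ring_nf
  have h3 : x ^ ((3:ℝ) - 1) = x ^ (2:ℕ) := by
    rw [show (3:ℝ) - 1 = ((2:ℕ):ℝ) by norm_num, Real.rpow_natCast]
  rw [smul_eq_mul, h1, h2, Real.log_exp, h3, neg_sq,
    show -(((n:ℝ) + 1) * x) = -x + -((n:ℝ) * x) by ring, Real.exp_add]
  ring

/-- The per-term integral. -/
private lemma aux_integral_s4 (n : ℕ) :
    ∫ t in Set.Ioo (0:ℝ) 1, t ^ n * Real.log t ^ 2 = 2 / ((n:ℝ) + 1) ^ 3 := by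
  have hr : (0:ℝ) < (n:ℝ) + 1 := by positivity
  have key := integral_image_eq_integral_abs_deriv_smul (f' := fun x => -Real.exp (-x))
    measurableSet_Ioi (fun x _ => exp_neg_hasDeriv x) exp_neg_injOn
    (fun t : ℝ => t ^ n * Real.log t ^ 2)
  rw [exp_neg_image] at key
  rw [key, setIntegral_congr_fun measurableSet_Ioi (fun x hx => smul_eq n hx),
    Real.integral_rpow_mul_exp_neg_mul_Ioi (by norm_num) hr]
  have hG : Real.Gamma 3 = 2 := by
    rw [show (3:ℝ) = (2:ℕ) + 1 by norm_num, Real.Gamma_nat_eq_factorial]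
    norm_num
  rw [hG, show (3:ℝ) = ((3:ℕ):ℝ) by norm_num, Real.rpow_natCast]
  rw [div_pow, one_pow]
  ring

/-- Integrability of the per-term function. -/
private lemma aux_integrable_s4 (n : ℕ) :
    IntegrableOn (fun t : ℝ => t ^ n * Real.log t ^ 2) (Set.Ioo (0:ℝ) 1) := by
  have hr : (0:ℝ) < (n:ℝ) + 1 := by positivity
  rw [← exp_neg_image]
  rw [integrableOn_image_iff_integrableOn_abs_deriv_smul measurableSet_Ioi
    (fun x _ => exp_neg_hasDeriv x) exp_neg_injOn]
  have : IntegrableOn (fun x : ℝ => x ^ ((2:ℝ)) * Real.exp (-((n:ℝ)+1) * x ^ (1:ℝ)))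
      (Set.Ioi 0) := integrableOn_rpow_mul_exp_neg_mul_rpow (by norm_num) (by norm_num) hr
  refine (this.congr_fun (fun x hx => ?_) measurableSet_Ioi)
  beta_reduce
  rw [Real.rpow_one]
  have := smul_eq n hx
  rw [show (3:ℝ) - 1 = (2:ℝ) by norm_num] at this
  rw [this]; ring_nf

private lemma term_hasSum {t : ℝ} (ht : t ∈ Set.Ioo (0:ℝ) 1) :
    HasSum (fun n : ℕ => -(t ^ n * Real.log t ^ 2 / ((n:ℝ) + 1)))
      (Real.log t ^ 2 * Real.log (1 - t) / t) := by
  obtain ⟨ht0, ht1⟩ := ht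
  have habs : |t| < 1 := by rw [abs_of_pos ht0]; exact ht1
  have h := (Real.hasSum_pow_div_log_of_abs_lt_one habs).mul_right
    (-(Real.log t ^ 2 / t))
  have hne : t ≠ 0 := ne_of_gt ht0
  have hval : Real.log t ^ 2 * Real.log (1 - t) / t
      = -Real.log (1 - t) * -(Real.log t ^ 2 / t) := by
    field_simp
  have hfun : ∀ n : ℕ, t ^ (n + 1) / ((n:ℝ) + 1) * -(Real.log t ^ 2 / t)
      = -(t ^ n * Real.log t ^ 2 / ((n:ℝ) + 1)) := by
    intro n
    rw [pow_succ]
    field_simp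
  rw [hval]
  exact HasSum.congr_fun h fun n => (hfun n).symm

theorem integral_log_sq_log_one_sub_div :
    ∫ t in Set.Ioo (0 : ℝ) 1, (Real.log t) ^ 2 * Real.log (1 - t) / t =
      -(Real.pi ^ 4 / 45) := by
  set F : ℕ → ℝ → ℝ := fun n t => -(t ^ n * Real.log t ^ 2 / ((n:ℝ) + 1)) with hF
  have hFint : ∀ n : ℕ, Integrable (F n) (volume.restrict (Set.Ioo (0:ℝ) 1)) := by
    intro n
    exact (((aux_integrable_s4 n).div_const _).neg)
  have hnorm : ∀ n : ℕ, (∫ t in Set.Ioo (0:ℝ) 1, ‖F n t‖) = 2 / ((n:ℝ) + 1)^4 := by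
    intro n
    have hr : (0:ℝ) < (n:ℝ) + 1 := by positivity
    have : ∀ t ∈ Set.Ioo (0:ℝ) 1, ‖F n t‖ = (t ^ n * Real.log t ^ 2) / ((n:ℝ)+1) := by
      intro t ht
      rw [hF]
      have h0 : (0:ℝ) ≤ t ^ n * Real.log t ^ 2 / ((n:ℝ)+1) :=
        div_nonneg (mul_nonneg (pow_nonneg ht.1.le n) (sq_nonneg _)) hr.le
      simp only [norm_neg, Real.norm_eq_abs, abs_of_nonneg h0]
    rw [setIntegral_congr_fun measurableSet_Ioo this, integral_div, aux_integral_s4]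
    rw [div_div]
    ring_nf
  have hsum : Summable fun n : ℕ => (∫ t in Set.Ioo (0:ℝ) 1, ‖F n t‖) := by
    simp_rw [hnorm]
    have : Summable fun n : ℕ => (1:ℝ) / ((n:ℝ)+1)^4 := by
      have := (Real.summable_one_div_nat_pow (p := 4)).mpr (by norm_num)
      have h2 := (summable_nat_add_iff 1).mpr this
      simpa using h2
    simpa [div_eq_mul_inv] using this.mul_left 2
  have key := MeasureTheory.integral_tsum_of_summable_integral_norm hFint hsum
  have heq : ∫ t in Set.Ioo (0:ℝ) 1, (Real.log t) ^ 2 * Real.log (1 - t) / t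
      = ∫ t in Set.Ioo (0:ℝ) 1, ∑' n, F n t := by
    refine setIntegral_congr_fun measurableSet_Ioo (fun t ht => ?_)
    exact (term_hasSum ht).tsum_eq.symm
  rw [heq, ← key]
  have hterm : ∀ n : ℕ, (∫ t in Set.Ioo (0:ℝ) 1, F n t) = -(2 / ((n:ℝ)+1)^4) := by
    intro n
    rw [hF]
    simp only
    rw [integral_neg, integral_div, aux_integral_s4, div_div]
    ring_nf
  simp_rw [hterm]
  have hz : HasSum (fun n : ℕ => (1:ℝ) / ((n:ℝ)+1) ^ 4) (π ^ 4 / 90) := by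
    have h := hasSum_zeta_four
    have h2 := (hasSum_nat_add_iff (f := fun n : ℕ => (1:ℝ) / (n:ℝ)^4) 1).mpr
      (by simpa using h)
    simpa using h2
  have := (hz.mul_left (-2)).tsum_eq
  have harg : (fun n : ℕ => -(2 / ((n:ℝ)+1)^4)) = fun n : ℕ => -2 * ((1:ℝ) / ((n:ℝ)+1)^4) := by
    funext n; ring
  rw [harg, this]
  ring
end

section
/- The integral ∫_0^1 ln t · (ln(1−t))² / t dt equals −ζ(4)/2 = −π⁴/180. -/
open Real MeasureTheory

namespace AuxILog

lemma cont_logpow (k : ℕ) : Continuous fun t : ℝ => Real.log t * t ^ (k + 1) := by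
  have : (fun t : ℝ => Real.log t * t ^ (k + 1)) = fun t => (t * Real.log t) * t ^ k := by
    ext t; ring
  rw [this]
  exact (Real.continuous_mul_log.comp continuous_id).mul (continuous_pow k)

lemma ilog (k : ℕ) :
    ∫ t in Set.Ioo (0:ℝ) 1, Real.log t * t ^ (k + 1) = -(1 / ((k:ℝ) + 2) ^ 2) := by
  have hk2 : ((k:ℝ) + 2) ≠ 0 := by positivity
  set F : ℝ → ℝ := fun t => (t * Real.log t) * t ^ (k+1) / ((k:ℝ)+2) - t ^ (k + 2) / ((k:ℝ)+2)^2 with hF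
  have hFcont : ContinuousOn F (Set.Icc 0 1) :=
    (((Real.continuous_mul_log.mul (continuous_pow (k+1))).div_const _).sub
      ((continuous_pow (k+2)).div_const _)).continuousOn
  have hderiv : ∀ x ∈ Set.Ioo (0:ℝ) 1, HasDerivAt F (Real.log x * x ^ (k+1)) x := by
    intro x hx
    have hx0 : x ≠ 0 := ne_of_gt hx.1
    have h1 : HasDerivAt (fun t : ℝ => Real.log t) x⁻¹ x := Real.hasDerivAt_log hx0
    have h2 : HasDerivAt (fun t : ℝ => t ^ (k+2)) ((k+2 : ℕ) * x ^ (k+1)) x := hasDerivAt_pow (k+2) x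
    have h3 : HasDerivAt (fun t : ℝ => Real.log t * t ^ (k+2))
        (x⁻¹ * x ^ (k+2) + Real.log x * ((k+2 : ℕ) * x ^ (k+1))) x := h1.mul h2
    have hFx : F = fun t => Real.log t * t ^ (k+2) / ((k:ℝ)+2) - t ^ (k+2)/((k:ℝ)+2)^2 := by
      ext t; simp [hF]; ring
    rw [hFx]
    have := (h3.div_const ((k:ℝ)+2)).sub (h2.div_const (((k:ℝ)+2)^2))
    refine this.congr_deriv ?_
    push_cast
    field_simp
    ring
  have hint : IntervalIntegrable (fun t : ℝ => Real.log t * t ^ (k+1)) volume 0 1 :=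
    (cont_logpow k).intervalIntegrable 0 1
  have := intervalIntegral.integral_eq_sub_of_hasDerivAt_of_le (by norm_num : (0:ℝ) ≤ 1)
    hFcont hderiv hint
  rw [intervalIntegral.integral_of_le (by norm_num : (0:ℝ) ≤ 1),
    MeasureTheory.integral_Ioc_eq_integral_Ioo] at this
  rw [this]
  simp [hF]

noncomputable def A (p : ℕ × ℕ) : ℝ := (1/((p.1:ℝ)+1)^2) * (1/((p.2:ℝ)+1)^2)

lemma A_nonneg (p : ℕ × ℕ) : 0 ≤ A p := by unfold A; positivity

lemma hs2 : HasSum (fun n : ℕ => 1/((n:ℝ)+1)^2) (π^2/6) := by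
  have h := (hasSum_nat_add_iff' (f := fun n : ℕ => 1/(n:ℝ)^2) 1).mpr hasSum_zeta_two
  simpa using h

lemma hs4 : HasSum (fun n : ℕ => 1/((n:ℝ)+1)^4) (π^4/90) := by
  have h := (hasSum_nat_add_iff' (f := fun n : ℕ => 1/(n:ℝ)^4) 1).mpr hasSum_zeta_four
  simpa using h

set_option maxHeartbeats 800000 in
lemma hsA : HasSum A (π^4/36) := by
  have h := hs2.mul hs2 (hs2.summable.mul_of_nonneg hs2.summable
    (fun n => by positivity) (fun n => by positivity))
  have hv : π^2/6 * (π^2/6) = π^4/36 := by ring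
  rw [hv] at h
  unfold A
  exact h

noncomputable def fLT (p : ℕ × ℕ) : ℝ := if p.1 < p.2 then A p else 0
noncomputable def fEQ (p : ℕ × ℕ) : ℝ := if p.1 = p.2 then A p else 0
noncomputable def fGT (p : ℕ × ℕ) : ℝ := if p.2 < p.1 then A p else 0

lemma sum_decomp (p : ℕ × ℕ) : fLT p + fEQ p + fGT p = A p := by
  unfold fLT fEQ fGT
  rcases lt_trichotomy p.1 p.2 with h | h | h
  · rw [if_pos h, if_neg (ne_of_lt h), if_neg (lt_asymm h)]; ring
  · rw [if_neg (by omega), if_pos h, if_neg (by omega)]; ring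
  · rw [if_neg (lt_asymm h), if_neg (Ne.symm (ne_of_lt h)), if_pos h]; ring

lemma hsEQ : HasSum fEQ (π^4/90) := by
  have hd : Function.Injective (fun n : ℕ => ((n, n) : ℕ × ℕ)) := by
    intro a b h; simpa using congrArg Prod.fst h
  refine (hd.hasSum_iff ?_).mp ?_
  · intro p hp
    have hne : p.1 ≠ p.2 := by
      intro h
      exact hp ⟨p.1, by rw [Prod.ext_iff]; exact ⟨rfl, h⟩⟩
    simp [fEQ, hne]
  · have hfun : (fEQ ∘ fun n : ℕ => ((n, n) : ℕ × ℕ)) = fun n : ℕ => 1/((n:ℝ)+1)^4 := by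
      funext n
      simp only [Function.comp, fEQ, A, if_pos]
      have h1 : ((n:ℝ)+1) ≠ 0 := by positivity
      field_simp
    rw [hfun]; exact hs4

lemma summable_fLT : Summable fLT := by
  refine Summable.of_nonneg_of_le (fun p => ?_) (fun p => ?_) hsA.summable
  · unfold fLT; split
    · exact A_nonneg p
    · exact le_refl 0
  · unfold fLT; split
    · exact le_refl _
    · exact A_nonneg p

lemma hsGT_eq : fGT = fLT ∘ (Equiv.prodComm ℕ ℕ) := by
  funext p
  simp only [Function.comp, Equiv.prodComm_apply, fGT, fLT, Prod.swap, A]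
  by_cases h : p.2 < p.1
  · rw [if_pos h]; refine Eq.trans ?_ (if_pos h).symm; ring
  · rw [if_neg h]; exact (if_neg h).symm

noncomputable def U1 (p : ℕ × ℕ) : ℝ := 1/(((p.1:ℝ)+1)^2 * ((p.1:ℝ)+(p.2:ℝ)+2)^2)
noncomputable def U2 (p : ℕ × ℕ) : ℝ := 1/(((p.2:ℝ)+1)^2 * ((p.1:ℝ)+(p.2:ℝ)+2)^2)
noncomputable def B (p : ℕ × ℕ) : ℝ :=
  1 / ((((p.1:ℝ)+1) * ((p.2:ℝ)+1)) * (((p.1:ℝ)+(p.2:ℝ)+2))^2)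

lemma B_nonneg (p : ℕ × ℕ) : 0 ≤ B p := by unfold B; positivity

lemma he_inj : Function.Injective (fun p : ℕ × ℕ => ((p.1, p.1 + p.2 + 1) : ℕ × ℕ)) := by
  intro a b h
  rw [Prod.ext_iff] at h ⊢
  simp only at h
  omega

lemma hfLT_comp : (fLT ∘ fun p : ℕ × ℕ => ((p.1, p.1 + p.2 + 1) : ℕ × ℕ)) = U1 := by
  funext p
  simp only [Function.comp, fLT, A, U1]
  rw [if_pos (by omega)]
  have h1 : ((p.1:ℝ)+1) ≠ 0 := by positivity
  have h2 : ((p.1:ℝ)+(p.2:ℝ)+2) ≠ 0 := by positivity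
  push_cast
  field_simp
  ring

lemma hsLT : HasSum fLT (π^4/120) := by
  have hLT := summable_fLT.hasSum
  set s := ∑' p, fLT p with hs
  have hGT : HasSum fGT s := by
    rw [hsGT_eq]
    exact (Equiv.prodComm ℕ ℕ).hasSum_iff.mpr hLT
  have hsum := (hLT.add hsEQ).add hGT
  have hfun : (fun p => fLT p + fEQ p + fGT p) = A := funext sum_decomp
  rw [hfun] at hsum
  have huniq := hsA.unique hsum
  have hsval : s = π^4/120 := by linarith
  rwa [hsval] at hLT

lemma hsU1 : HasSum U1 (π^4/120) := by
  rw [← hfLT_comp]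
  refine (he_inj.hasSum_iff ?_).mpr hsLT
  intro p hp
  have hne : ¬ p.1 < p.2 := by
    intro h
    refine hp ⟨(p.1, p.2 - p.1 - 1), ?_⟩
    have hpp : p.1 + (p.2 - p.1 - 1) + 1 = p.2 := by omega
    simp [Prod.ext_iff, hpp]
  simp [fLT, hne]

lemma hsU2 : HasSum U2 (π^4/120) := by
  have hfun : U2 = U1 ∘ (Equiv.prodComm ℕ ℕ) := by
    funext p
    simp only [Function.comp, Equiv.prodComm_apply, U1, U2, Prod.swap]
    ring_nf
  rw [hfun]
  exact (Equiv.prodComm ℕ ℕ).hasSum_iff.mpr hsU1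

lemma summable_B : Summable B := by
  refine Summable.of_nonneg_of_le B_nonneg (fun p => ?_) hsA.summable
  unfold B A
  rw [div_mul_div_comm, one_mul]
  apply one_div_le_one_div_of_le
  · positivity
  · have hx : (0:ℝ) ≤ (p.1:ℝ) := Nat.cast_nonneg _
    have hy : (0:ℝ) ≤ (p.2:ℝ) := Nat.cast_nonneg _
    nlinarith [mul_nonneg hx hy, mul_nonneg (mul_nonneg hx hy) hx,
      mul_nonneg (mul_nonneg hx hy) hy, mul_nonneg (mul_nonneg (mul_nonneg hx hy) hx) hy,
      sq_nonneg ((p.1:ℝ) + (p.2:ℝ)), mul_nonneg hx (sq_nonneg ((p.2:ℝ))), mul_nonneg hy (sq_nonneg ((p.1:ℝ)))]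

lemma hsB : HasSum B (π^4/180) := by
  have hB := summable_B.hasSum
  set s := ∑' p, B p with hs
  have hkey : (fun p => U1 p + U2 p + 2 * B p) = A := by
    funext p
    unfold U1 U2 B A
    have h1 : ((p.1:ℝ)+1) ≠ 0 := by positivity
    have h2 : ((p.2:ℝ)+1) ≠ 0 := by positivity
    have h3 : ((p.1:ℝ)+(p.2:ℝ)+2) ≠ 0 := by positivity
    field_simp
    ring
  have hsum := (hsU1.add hsU2).add (hB.mul_left 2)
  rw [hkey] at hsum
  have huniq := hsA.unique hsum
  have : s = π^4/180 := by linarith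
  rwa [this] at hB

end AuxILog

theorem integral_log_mul_log_one_sub_sq_div :
    ∫ t in Set.Ioo (0 : ℝ) 1, Real.log t * (Real.log (1 - t)) ^ 2 / t =
      -(Real.pi ^ 4 / 180) := by
  classical
  set g : ℕ × ℕ → ℝ → ℝ := fun p t =>
    ((((p.1:ℝ)+1) * ((p.2:ℝ)+1))⁻¹) * (Real.log t * t ^ (p.1 + p.2 + 1)) with hg
  have hInt : ∀ p : ℕ × ℕ, ∫ t in Set.Ioo (0:ℝ) 1, g p t = -(AuxILog.B p) := by
    intro p
    rw [hg]
    rw [MeasureTheory.integral_const_mul]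
    rw [AuxILog.ilog (p.1 + p.2)]
    unfold AuxILog.B
    have h1 : ((p.1:ℝ)+1) ≠ 0 := by positivity
    have h2 : ((p.2:ℝ)+1) ≠ 0 := by positivity
    have h3 : ((p.1:ℝ)+(p.2:ℝ)+2) ≠ 0 := by positivity
    push_cast
    field_simp
  have hcont : ∀ p : ℕ × ℕ, Continuous (g p) := fun p =>
    continuous_const.mul (AuxILog.cont_logpow (p.1 + p.2))
  have hintOn : ∀ p : ℕ × ℕ, IntegrableOn (g p) (Set.Ioo (0:ℝ) 1) := fun p =>
    ((hcont p).integrableOn_Icc (a := 0) (b := 1)).mono_set Set.Ioo_subset_Icc_self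
  have hpt : ∀ t ∈ Set.Ioo (0:ℝ) 1,
      HasSum (fun p : ℕ × ℕ => g p t) (Real.log t * (Real.log (1 - t)) ^ 2 / t) := by
    intro t ht
    have ht0 : 0 < t := ht.1
    have ht1 : t < 1 := ht.2
    have habs : |t| < 1 := by rw [abs_of_pos ht0]; exact ht1
    have hl := Real.hasSum_pow_div_log_of_abs_lt_one habs
    have hsumm : Summable (fun p : ℕ × ℕ =>
        (t ^ (p.1+1) / ((p.1:ℝ)+1)) * (t ^ (p.2+1) / ((p.2:ℝ)+1))) :=
      hl.summable.mul_of_nonneg hl.summable (fun n => by positivity) (fun n => by positivity)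
    have hmul := (hl.mul hl hsumm).mul_left (Real.log t / t)
    have hfun : (fun p : ℕ × ℕ => Real.log t / t *
        ((t ^ (p.1+1) / ((p.1:ℝ)+1)) * (t ^ (p.2+1) / ((p.2:ℝ)+1)))) = fun p => g p t := by
      funext p
      rw [hg]
      have ht0' : t ≠ 0 := ne_of_gt ht0
      have h1 : ((p.1:ℝ)+1) ≠ 0 := by positivity
      have h2 : ((p.2:ℝ)+1) ≠ 0 := by positivity
      field_simp
      ring
    have hval : Real.log t / t * (-Real.log (1 - t) * -Real.log (1 - t)) =
        Real.log t * (Real.log (1 - t)) ^ 2 / t := by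
      rw [neg_mul_neg, ← sq]; ring
    rw [hfun, hval] at hmul
    exact hmul
  have heq : Set.EqOn (fun t => Real.log t * (Real.log (1 - t)) ^ 2 / t)
      (fun t => ∑' p : ℕ × ℕ, g p t) (Set.Ioo (0:ℝ) 1) :=
    fun t ht => ((hpt t ht).tsum_eq).symm
  rw [MeasureTheory.setIntegral_congr_fun measurableSet_Ioo heq]
  rw [MeasureTheory.integral_tsum (fun p => (hcont p).aestronglyMeasurable)]
  · rw [tsum_congr hInt]
    rw [AuxILog.hsB.neg.tsum_eq]
  · have hnorm : ∀ p : ℕ × ℕ,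
        ∫⁻ t in Set.Ioo (0:ℝ) 1, ‖g p t‖ₑ = ENNReal.ofReal (AuxILog.B p) := by
      intro p
      rw [← MeasureTheory.ofReal_integral_norm_eq_lintegral_enorm (hintOn p)]
      congr 1
      have hs : ∫ t in Set.Ioo (0:ℝ) 1, ‖g p t‖ = ∫ t in Set.Ioo (0:ℝ) 1, -(g p t) := by
        apply MeasureTheory.setIntegral_congr_fun measurableSet_Ioo
        intro t ht
        have hlog : Real.log t ≤ 0 := le_of_lt (Real.log_neg ht.1 ht.2)
        have hnp : g p t ≤ 0 := by
          rw [hg]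
          apply mul_nonpos_iff.mpr
          exact Or.inl ⟨by positivity,
            mul_nonpos_of_nonpos_of_nonneg hlog (pow_nonneg (le_of_lt ht.1) _)⟩
        simp [Real.norm_eq_abs, abs_of_nonpos hnp]
      rw [hs, MeasureTheory.integral_neg, hInt p, neg_neg]
    simp_rw [hnorm]
    rw [← ENNReal.ofReal_tsum_of_nonneg AuxILog.B_nonneg AuxILog.summable_B]
    exact ENNReal.ofReal_ne_top
end

section
/- The improper integral of z⁴ · ln(1+e^z)/(1+e^z) over the whole real line equals (279/2)·ζ(6), i.e. ∫_{-∞}^{+∞} z⁴ ln(1+eᶻ)/(1+eᶻ) dz = (279/2)·π⁶/945. -/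
open Real MeasureTheory Set

namespace Zeta6Aux

lemma exp_pos_add (z : ℝ) : (0:ℝ) < 1 + Real.exp z := by positivity

lemma contF : Continuous (fun z : ℝ => z ^ 4 * Real.log (1 + Real.exp z) / (1 + Real.exp z)) := by
  apply Continuous.div
  · exact (continuous_pow 4).mul ((continuous_const.add Real.continuous_exp).log
      (fun z => (exp_pos_add z).ne'))
  · exact continuous_const.add Real.continuous_exp
  · exact fun z => (exp_pos_add z).ne'

lemma Fnonneg (z : ℝ) : 0 ≤ z ^ 4 * Real.log (1 + Real.exp z) / (1 + Real.exp z) := by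
  apply div_nonneg _ (exp_pos_add z).le
  apply mul_nonneg (by positivity)
  apply Real.log_nonneg
  nlinarith [Real.exp_pos z]

lemma log_split (z : ℝ) : Real.log (1 + Real.exp z) = z + Real.log (1 + Real.exp (-z)) := by
  have h : (1 : ℝ) + Real.exp z = Real.exp z * (1 + Real.exp (-z)) := by
    rw [mul_add, mul_one, ← Real.exp_add]
    simp [add_comm]
  rw [h, Real.log_mul (Real.exp_pos z).ne' (exp_pos_add (-z)).ne', Real.log_exp]

lemma log_le (z : ℝ) : Real.log (1 + Real.exp z) ≤ Real.exp z := by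
  have := Real.log_le_sub_one_of_pos (exp_pos_add z)
  linarith

lemma FG (z : ℝ) : z ^ 4 * Real.log (1 + Real.exp z) / (1 + Real.exp z)
    + (-z) ^ 4 * Real.log (1 + Real.exp (-z)) / (1 + Real.exp (-z))
    = z ^ 4 * Real.log (1 + Real.exp (-z)) + z ^ 5 * Real.exp (-z) / (1 + Real.exp (-z)) := by
  have hA : Real.exp z * Real.exp (-z) = 1 := by rw [← Real.exp_add]; simp
  have h1 : (1 : ℝ) + Real.exp z ≠ 0 := (exp_pos_add z).ne'
  have h2 : (1 : ℝ) + Real.exp (-z) ≠ 0 := (exp_pos_add (-z)).ne'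
  have hE : Real.exp z ≠ 0 := (Real.exp_pos z).ne'
  rw [log_split z, neg_pow, Real.exp_neg] at *
  field_simp
  ring

lemma intOn (k : ℕ) {c : ℝ} (hc : 0 < c) :
    IntegrableOn (fun z : ℝ => z ^ k * Real.exp (-(c * z))) (Ioi 0) := by
  have := integrableOn_rpow_mul_exp_neg_mul_rpow (p := 1) (s := k) (b := c)
    (lt_of_lt_of_le neg_one_lt_zero (Nat.cast_nonneg k)) one_pos hc
  apply this.congr_fun ?_ measurableSet_Ioi
  intro x hx
  simp [Real.rpow_natCast, Real.rpow_one]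

lemma intval (k : ℕ) {c : ℝ} (hc : 0 < c) :
    ∫ z in Ioi 0, z ^ k * Real.exp (-(c * z)) = (Nat.factorial k : ℝ) / c ^ (k + 1) := by
  have h := integral_rpow_mul_exp_neg_mul_Ioi (a := (k : ℝ) + 1) (r := c) (by positivity) hc
  rw [show ((k:ℝ)+1) - 1 = (k:ℝ) by ring] at h
  simp_rw [Real.rpow_natCast] at h
  have h2 : (1/c) ^ ((k:ℝ)+1) = (1/c) ^ (k+1) := by
    rw [show ((k:ℝ)+1) = ((k+1:ℕ):ℝ) by push_cast; ring, Real.rpow_natCast]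
  rw [h, h2, Real.Gamma_nat_eq_factorial, div_pow, one_pow]; ring

lemma intOn' (k : ℕ) : IntegrableOn (fun z : ℝ => z ^ k * Real.exp (-z)) (Ioi 0) := by
  have := intOn k one_pos
  simpa using this

lemma intIoi : IntegrableOn (fun z : ℝ => z ^ 4 * Real.log (1 + Real.exp z) / (1 + Real.exp z))
    (Ioi 0) := by
  have hg : IntegrableOn (fun z : ℝ => z ^ 4 * Real.exp (-z) + z ^ 5 * Real.exp (-z)) (Ioi 0) :=
    (intOn' 4).add (intOn' 5)
  refine hg.mono' contF.aestronglyMeasurable.restrict ?_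
  refine (ae_restrict_iff' measurableSet_Ioi).2 (ae_of_all _ fun z hz => ?_)
  simp only [mem_Ioi] at hz
  rw [Real.norm_eq_abs, abs_of_nonneg (Fnonneg z)]
  have hD : (0:ℝ) < 1 + Real.exp z := exp_pos_add z
  rw [div_le_iff₀ hD]
  have hL : Real.log (1 + Real.exp z) ≤ z + Real.exp (-z) := by
    rw [log_split z]; have := log_le (-z); linarith
  have he : Real.exp (-z) * Real.exp z = 1 := by rw [← Real.exp_add]; simp
  have hz4 : (0:ℝ) ≤ z ^ 4 := by positivity
  have hez : (0:ℝ) < Real.exp (-z) := Real.exp_pos _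
  have hezle : Real.exp (-z) ≤ 1 := Real.exp_le_one_iff.2 (by linarith)
  have key : z + Real.exp (-z) ≤ (Real.exp (-z) + Real.exp (-z) * Real.exp z) * (1 + z) := by
    nlinarith
  calc z ^ 4 * Real.log (1 + Real.exp z) ≤ z ^ 4 * (z + Real.exp (-z)) := by nlinarith
    _ ≤ z ^ 4 * ((Real.exp (-z) + Real.exp (-z) * Real.exp z) * (1 + z)) := by nlinarith
    _ = (z ^ 4 * Real.exp (-z) + z ^ 5 * Real.exp (-z)) * (1 + Real.exp z) := by ring

lemma intIic : IntegrableOn (fun z : ℝ => z ^ 4 * Real.log (1 + Real.exp z) / (1 + Real.exp z))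
    (Iic 0) := by
  have hg : IntegrableOn (fun z : ℝ => z ^ 4 * Real.exp z) (Iic 0) := by
    have m : MeasurableEmbedding (fun x : ℝ => -x) := (Homeomorph.neg ℝ).measurableEmbedding
    rw [← Measure.map_neg_eq_self (volume : Measure ℝ), m.integrableOn_map_iff]
    have h : ((fun z : ℝ => z ^ 4 * Real.exp z) ∘ fun x : ℝ => -x)
        = fun x : ℝ => x ^ 4 * Real.exp (-x) := by
      funext x; simp; ring
    rw [h, show (fun x : ℝ => -x) ⁻¹' Iic 0 = Ici 0 by simp [neg_preimage, neg_Iic]]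
    exact Iff.mpr integrableOn_Ici_iff_integrableOn_Ioi (intOn' 4)
  refine hg.mono' contF.aestronglyMeasurable.restrict ?_
  refine (ae_restrict_iff' measurableSet_Iic).2 (ae_of_all _ fun z hz => ?_)
  simp only [mem_Iic] at hz
  rw [Real.norm_eq_abs, abs_of_nonneg (Fnonneg z)]
  have hD : (0:ℝ) < 1 + Real.exp z := exp_pos_add z
  rw [div_le_iff₀ hD]
  have hL : Real.log (1 + Real.exp z) ≤ Real.exp z := log_le z
  have hL0 : 0 ≤ Real.log (1 + Real.exp z) := Real.log_nonneg (by nlinarith [Real.exp_pos z])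
  have hz4 : (0:ℝ) ≤ z ^ 4 := by positivity
  nlinarith [mul_le_mul_of_nonneg_left hL hz4,
    mul_nonneg hz4 (mul_pos (Real.exp_pos z) (Real.exp_pos z)).le]

theorem bernoulli'_five : bernoulli' 5 = 0 := by
  have h1 : Nat.choose 5 2 = 10 := by decide
  rw [bernoulli'_def]
  norm_num [Finset.sum_range_succ, h1]

theorem bernoulli'_six : bernoulli' 6 = 1 / 42 := by
  have h1 : Nat.choose 6 2 = 15 := by decide
  have h2 : Nat.choose 6 4 = 15 := by decide
  rw [bernoulli'_def]
  norm_num [Finset.sum_range_succ, h1, h2, bernoulli'_five]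

lemma hasSum_zeta_six : HasSum (fun n : ℕ => (1 : ℝ) / (n : ℝ) ^ 6) (π ^ 6 / 945) := by
  convert hasSum_zeta_nat (k := 3) three_ne_zero using 1
  rw [bernoulli_eq_bernoulli'_of_ne_one (by norm_num), bernoulli'_six]
  norm_num [Nat.factorial]
  ring

lemma hasSum_zeta_six' : HasSum (fun n : ℕ => (1 : ℝ) / ((n : ℝ) + 1) ^ 6) (π ^ 6 / 945) := by
  have h : HasSum (fun n : ℕ => (1 : ℝ) / (n : ℝ) ^ 6)
      (π ^ 6 / 945 + ∑ i ∈ Finset.range 1, (1 : ℝ) / (i : ℝ) ^ 6) := by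
    simpa using hasSum_zeta_six
  have h2 := (hasSum_nat_add_iff (f := fun n : ℕ => (1 : ℝ) / (n : ℝ) ^ 6) 1).2 h
  exact h2.congr_fun fun n => by push_cast; ring

lemma hasSum_alt : HasSum (fun n : ℕ => (-1 : ℝ) ^ n * (144 / ((n : ℝ) + 1) ^ 6))
    ((279 / 2) * (π ^ 6 / 945)) := by
  set z6 : ℝ := π ^ 6 / 945 with hz6
  have hodd : HasSum (fun n : ℕ => if Odd n then 144 / ((n : ℝ) + 1) ^ 6 else 0)
      (144 / 64 * z6) := by
    have hinj : Function.Injective (fun k : ℕ => 2 * k + 1) := by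
      intro a b h; simp only at h; omega
    refine (hinj.hasSum_iff ?_).1 ?_
    · intro x hx
      have hne : ¬ Odd x := by
        intro ⟨k, hk⟩; exact hx ⟨k, by simp; omega⟩
      simp [hne]
    · refine (hasSum_zeta_six'.mul_left (144 / 64)).congr_fun fun k => ?_
      have hodd' : Odd (2 * k + 1) := odd_two_mul_add_one k
      have hk : ((k : ℝ) + 1) ≠ 0 := by positivity
      simp only [Function.comp_apply, hodd', if_pos]
      push_cast
      field_simp
      ring
  have hkey := (hasSum_zeta_six'.mul_left 144).sub (hodd.mul_left 2)
  have hval : 144 * z6 - 2 * (144 / 64 * z6) = (279 / 2) * z6 := by ring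
  rw [hval] at hkey
  refine hkey.congr_fun fun n => ?_
  rcases Nat.even_or_odd n with he | ho
  · have h : ¬ Odd n := Nat.not_odd_iff_even.2 he
    simp [h, he.neg_pow]; ring
  · simp [ho, ho.neg_pow]
    ring

lemma hasSum_G {z : ℝ} (hz : 0 < z) :
    HasSum (fun n : ℕ => (-1 : ℝ) ^ n * Real.exp (-(((n : ℝ) + 1) * z))
        * (z ^ 4 / ((n : ℝ) + 1) + z ^ 5))
      (z ^ 4 * Real.log (1 + Real.exp (-z)) + z ^ 5 * Real.exp (-z) / (1 + Real.exp (-z))) := by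
  set x := Real.exp (-z) with hxdef
  have hx0 : 0 < x := Real.exp_pos _
  have hx1 : x < 1 := Real.exp_lt_one_iff.2 (by linarith)
  have habs : |(-x)| < 1 := by rw [abs_neg, abs_of_pos hx0]; exact hx1
  have h1 := (hasSum_pow_div_log_of_abs_lt_one habs).mul_left (-(z ^ 4))
  have h2 := (hasSum_geometric_of_abs_lt_one habs).mul_left (z ^ 5 * x)
  have hsum := h1.add h2
  have hval : -(z ^ 4) * -Real.log (1 - -x) + z ^ 5 * x * (1 - -x)⁻¹
      = z ^ 4 * Real.log (1 + x) + z ^ 5 * x / (1 + x) := by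
    rw [sub_neg_eq_add]; ring
  rw [hval] at hsum
  refine hsum.congr_fun fun n => ?_
  have hE : x ^ (n + 1) = Real.exp (-(((n : ℝ) + 1) * z)) := by
    rw [hxdef, ← Real.exp_nat_mul]
    congr 1
    push_cast; ring
  have hneg : (-x) ^ (n + 1) = (-1 : ℝ) ^ n * (-1) * x ^ (n + 1) := by
    rw [neg_pow]; ring
  have hnegn : (-x) ^ n = (-1 : ℝ) ^ n * x ^ n := by rw [neg_pow]
  have hxx : x * x ^ n = x ^ (n + 1) := by rw [pow_succ]; ring
  calc (-1 : ℝ) ^ n * Real.exp (-(((n : ℝ) + 1) * z)) * (z ^ 4 / ((n : ℝ) + 1) + z ^ 5)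
      = (-1 : ℝ) ^ n * x ^ (n + 1) * (z ^ 4 / ((n : ℝ) + 1) + z ^ 5) := by rw [hE]
    _ = -(z ^ 4) * ((-x) ^ (n + 1) / ((n : ℝ) + 1)) + z ^ 5 * x * (-x) ^ n := by
        rw [hneg, hnegn, ← hxx]; ring

noncomputable def u (n : ℕ) (z : ℝ) : ℝ :=
  (-1 : ℝ) ^ n * Real.exp (-(((n : ℝ) + 1) * z)) * (z ^ 4 / ((n : ℝ) + 1) + z ^ 5)

lemma u_rw (n : ℕ) : u n = fun z : ℝ =>
    ((-1 : ℝ) ^ n / ((n : ℝ) + 1)) * (z ^ 4 * Real.exp (-(((n : ℝ) + 1) * z)))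
      + (-1 : ℝ) ^ n * (z ^ 5 * Real.exp (-(((n : ℝ) + 1) * z))) := by
  funext z; unfold u; ring

lemma hc (n : ℕ) : (0:ℝ) < (n : ℝ) + 1 := by positivity

lemma u_integrable (n : ℕ) : IntegrableOn (u n) (Ioi 0) := by
  rw [u_rw]
  exact ((intOn 4 (hc n)).const_mul _).add ((intOn 5 (hc n)).const_mul _)

lemma u_val (n : ℕ) : ∫ z in Ioi 0, u n z
    = (-1 : ℝ) ^ n * (144 / ((n : ℝ) + 1) ^ 6) := by
  rw [u_rw]
  rw [integral_add ((intOn 4 (hc n)).const_mul _) ((intOn 5 (hc n)).const_mul _),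
    integral_const_mul, integral_const_mul, intval 4 (hc n), intval 5 (hc n)]
  have h : ((n : ℝ) + 1) ≠ 0 := (hc n).ne'
  norm_num [Nat.factorial]
  field_simp
  ring

lemma u_norm (n : ℕ) : ∫ z in Ioi 0, ‖u n z‖ = 144 / ((n : ℝ) + 1) ^ 6 := by
  have heq : ∀ z ∈ Ioi (0:ℝ), ‖u n z‖
      = (1 / ((n : ℝ) + 1)) * (z ^ 4 * Real.exp (-(((n : ℝ) + 1) * z)))
        + 1 * (z ^ 5 * Real.exp (-(((n : ℝ) + 1) * z))) := by
    intro z hz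
    simp only [mem_Ioi] at hz
    have hnn : 0 ≤ z ^ 4 / ((n : ℝ) + 1) + z ^ 5 := by positivity
    rw [Real.norm_eq_abs]
    unfold u
    rw [abs_mul, abs_mul, abs_pow, abs_neg, abs_one, one_pow, one_mul,
      abs_of_pos (Real.exp_pos _), abs_of_nonneg hnn]
    ring
  rw [setIntegral_congr_fun measurableSet_Ioi heq]
  rw [integral_add ((intOn 4 (hc n)).const_mul _) ((intOn 5 (hc n)).const_mul _),
    integral_const_mul, integral_const_mul, intval 4 (hc n), intval 5 (hc n)]
  have h : ((n : ℝ) + 1) ≠ 0 := (hc n).ne'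
  norm_num [Nat.factorial]
  field_simp
  ring

lemma u_norm_summable : Summable (fun n : ℕ => ∫ z in Ioi 0, ‖u n z‖) := by
  refine Summable.congr ((hasSum_zeta_six'.summable).mul_left 144) fun n => ?_
  rw [u_norm]
  ring

end Zeta6Aux

open Zeta6Aux in
theorem zeta6_integral :
    ∫ z : ℝ, z ^ 4 * Real.log (1 + Real.exp z) / (1 + Real.exp z) =
      (279 / 2) * (Real.pi ^ 6 / 945) := by
  set F : ℝ → ℝ := fun z => z ^ 4 * Real.log (1 + Real.exp z) / (1 + Real.exp z) with hFdef
  have hInt : Integrable F := by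
    rw [← integrableOn_univ, ← Set.Iic_union_Ioi (a := (0:ℝ))]
    exact intIic.union intIoi
  have hneg : Integrable (fun z => F (-z)) := hInt.comp_neg
  set f : ℝ → ℝ := fun z => F z + F (-z) with hfdef
  have hf : Integrable f := hInt.add hneg
  have hfe : ∀ x : ℝ, f (-x) = f x := fun x => by
    simp only [hfdef, neg_neg]; ring
  have h2I : ∫ z, f z = (∫ z, F z) + (∫ z, F z) := by
    rw [hfdef]
    rw [integral_add hInt hneg, integral_neg_eq_self F volume]
  have hsplit : ∫ z, f z = 2 * ∫ z in Ioi 0, f z := by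
    rw [← setIntegral_univ, ← Set.Iic_union_Ioi (a := (0:ℝ)),
      setIntegral_union (Iic_disjoint_Ioi le_rfl) measurableSet_Ioi hf.integrableOn
        hf.integrableOn]
    have hIic : ∫ z in Iic (0:ℝ), f z = ∫ z in Ioi (0:ℝ), f z := by
      have h := integral_comp_neg_Iic (0:ℝ) f
      rw [neg_zero] at h
      rw [← h]
      exact setIntegral_congr_fun measurableSet_Iic fun x _ => (hfe x).symm
    rw [hIic]; ring
  have hIoi_eq : ∫ z in Ioi 0, f z = ∑' n : ℕ, ((-1 : ℝ) ^ n * (144 / ((n : ℝ) + 1) ^ 6)) := by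
    have hcongr : ∀ z ∈ Ioi (0:ℝ), f z = ∑' n : ℕ, u n z := by
      intro z hz
      simp only [mem_Ioi] at hz
      have hG := hasSum_G hz
      have : f z = z ^ 4 * Real.log (1 + Real.exp (-z))
          + z ^ 5 * Real.exp (-z) / (1 + Real.exp (-z)) := by
        simp only [hfdef, hFdef]
        have := FG z
        linarith [FG z]
      rw [this, ← hG.tsum_eq]
      rfl
    rw [setIntegral_congr_fun measurableSet_Ioi hcongr,
      ← integral_tsum_of_summable_integral_norm (fun n => u_integrable n) u_norm_summable]
    exact tsum_congr fun n => u_val n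
  have := hasSum_alt.tsum_eq
  rw [hIoi_eq, this] at hsplit
  rw [hFdef] at h2I ⊢
  linarith [h2I, hsplit]
end
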